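/- In first passage percolation with passage times T, suppose that for k disjoint finite sets A₁,…,A_k the coexistence event occurs: each A_i infects infinitely many vertices v (i.e., for infinitely many v, T(A_i, v) < T(A_j, v) for all j ≠ i). Suppose moreover that for each i the infection is transmitted along finite geodesics, and every vertex of Z^d has finite degree. Then there exist k pairwise disjoint one-sided (semi-infinite) geodesics, the i-th starting in A_i. -/

import Mathlib

open scoped NNReal

/-- Two vertices of `ℤ^d` are adjacent iff their `ℓ¹`-distance is 1 (so every
vertex has finite degree `2d`). -/
def adjZ {d : ℕ} (u v : Fin d → ℤ) : Prop :=
  (∑ i, (u i - v i).natAbs) = 1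

/-- The passage time of a path (a list of vertices). -/
def pathTime {d : ℕ} (τ : (Fin d → ℤ) → (Fin d → ℤ) → ℝ≥0) :
    List (Fin d → ℤ) → ℝ≥0
  | [] => 0
  | [_] => 0
  | a :: b :: rest => τ a b + pathTime τ (b :: rest)

/-- `γ` is a lattice path from `u` to `v`. -/
def IsPathFrom {d : ℕ} (u v : Fin d → ℤ) (γ : List (Fin d → ℤ)) : Prop :=
  γ.head? = some u ∧ γ.getLast? = some v ∧ List.Chain' adjZ γ

/-- Point-to-point first passage time. -/
noncomputable def fpT {d : ℕ} (τ : (Fin d → ℤ) → (Fin d → ℤ) → ℝ≥0)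
    (u v : Fin d → ℤ) : ℝ≥0 :=
  ⨅ γ : {γ : List (Fin d → ℤ) // IsPathFrom u v γ}, pathTime τ γ.1

/-- `γ` is a lattice path from the set `A` to `v`. -/
def IsPathFromSet {d : ℕ} (A : Set (Fin d → ℤ)) (v : Fin d → ℤ)
    (γ : List (Fin d → ℤ)) : Prop :=
  ∃ u ∈ A, IsPathFrom u v γ

/-- First passage time from a set `A` to a vertex `v`. -/
noncomputable def fpTSet {d : ℕ} (τ : (Fin d → ℤ) → (Fin d → ℤ) → ℝ≥0)
    (A : Set (Fin d → ℤ)) (v : Fin d → ℤ) : ℝ≥0 :=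
  ⨅ γ : {γ : List (Fin d → ℤ) // IsPathFromSet A v γ}, pathTime τ γ.1

/-- The set of vertices infected by species `i` (strictly closer in passage time
to `A i` than to every other `A j`). -/
noncomputable def infectedBy {d k : ℕ} (τ : (Fin d → ℤ) → (Fin d → ℤ) → ℝ≥0)
    (A : Fin k → Set (Fin d → ℤ)) (i : Fin k) : Set (Fin d → ℤ) :=
  {v | ∀ j : Fin k, j ≠ i → fpTSet τ (A i) v < fpTSet τ (A j) v}

namespace FPPAux
variable {d : ℕ} {τ : (Fin d → ℤ) → (Fin d → ℤ) → ℝ≥0}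

@[simp] lemma pathTime_nil : pathTime τ [] = 0 := rfl
@[simp] lemma pathTime_single (a : Fin d → ℤ) : pathTime τ [a] = 0 := rfl
@[simp] lemma pathTime_cons_cons (a b : Fin d → ℤ) (l : List (Fin d → ℤ)) :
    pathTime τ (a :: b :: l) = τ a b + pathTime τ (b :: l) := rfl

lemma tail_take' {α : Type*} (s : List α) (k : ℕ) :
    (s.take (k+1)).tail = s.tail.take k := by
  cases s <;> simp

lemma head?_take_pos {α : Type*} (s : List α) {k : ℕ} (hk : 0 < k) :
    (s.take k).head? = s.head? := by
  cases s with
  | nil => simp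
  | cons a t => cases k with
    | zero => omega
    | succ k => simp

lemma getLast?_take_succ {α : Type*} (l : List α) {n : ℕ} (h : n < l.length) :
    (l.take (n+1)).getLast? = some (l.get ⟨n, h⟩) := by
  rw [List.take_succ, List.getElem?_eq_getElem h]
  show (List.take n l ++ [l[n]]).getLast? = _
  rw [List.getLast?_concat]
  rfl

lemma pathTime_append_overlap (α β : List (Fin d → ℤ)) (h : α.getLast? = β.head?) :
    pathTime τ (α ++ β.tail) = pathTime τ α + pathTime τ β := by
  induction α with
  | nil =>
      simp only [List.getLast?_nil] at h
      cases β with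
      | nil => simp
      | cons c t => simp at h
  | cons a α ih =>
      cases α with
      | nil =>
          simp only [List.getLast?_singleton] at h
          cases β with
          | nil => simp at h
          | cons c t =>
              simp only [List.head?_cons, Option.some.injEq] at h
              subst h
              simp
      | cons b r =>
          have h' : (b :: r).getLast? = β.head? := by
            simpa using h
          have key := ih h'
          have : (a :: b :: r) ++ β.tail = a :: ((b :: r) ++ β.tail) := rfl
          rw [this]
          have : (b :: r) ++ β.tail = b :: (r ++ β.tail) := rfl
          rw [this] at key ⊢
          rw [pathTime_cons_cons, key, pathTime_cons_cons]
          ring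

lemma chain'_append_overlap {α β : List (Fin d → ℤ)} (ha : List.Chain' adjZ α)
    (hb : List.Chain' adjZ β) (h : α.getLast? = β.head?) :
    List.Chain' adjZ (α ++ β.tail) := by
  cases β with
  | nil => simpa using ha
  | cons c t =>
      simp only [List.head?_cons] at h
      refine List.IsChain.append ha hb.tail ?_
      intro x hx y hy
      rw [h] at hx
      simp only [Option.mem_def, Option.some.injEq] at hx
      subst hx
      rw [List.Chain', List.isChain_cons] at hb
      exact hb.1 y hy

lemma getLast?_append_overlap {α β : List (Fin d → ℤ)} (h : α.getLast? = β.head?) :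
    (α ++ β.tail).getLast? = if β = [] then α.getLast? else β.getLast? := by
  cases β with
  | nil => simp
  | cons c t =>
      simp only [List.head?_cons] at h
      cases t with
      | nil => simp [h]
      | cons x t' =>
          rw [List.tail_cons, List.getLast?_append_of_ne_nil _ (by simp)]
          simp [List.getLast?]


lemma fpT_le {u v : Fin d → ℤ} {γ : List (Fin d → ℤ)} (h : IsPathFrom u v γ) :
    fpT τ u v ≤ pathTime τ γ :=
  ciInf_le (OrderBot.bddBelow _) (⟨γ, h⟩ : {γ // IsPathFrom u v γ})

lemma fpTSet_le {A : Set (Fin d → ℤ)} {v : Fin d → ℤ} {γ : List (Fin d → ℤ)}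
    (h : IsPathFromSet A v γ) : fpTSet τ A v ≤ pathTime τ γ :=
  ciInf_le (OrderBot.bddBelow _) (⟨γ, h⟩ : {γ // IsPathFromSet A v γ})

lemma exists_path_lt {u v : Fin d → ℤ} {c : ℝ≥0} (hne : ∃ γ, IsPathFrom u v γ)
    (h : fpT τ u v < c) : ∃ γ, IsPathFrom u v γ ∧ pathTime τ γ < c := by
  have : Nonempty {γ // IsPathFrom u v γ} := ⟨⟨hne.choose, hne.choose_spec⟩⟩
  obtain ⟨x, hx⟩ := exists_lt_of_ciInf_lt h
  exact ⟨x.1, x.2, hx⟩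

lemma fpTSet_eq_zero {A : Set (Fin d → ℤ)} {v : Fin d → ℤ} (hv : v ∈ A) :
    fpTSet τ A v = 0 := by
  have h : IsPathFromSet A v [v] := ⟨v, hv, rfl, rfl, List.isChain_singleton v⟩
  have := fpTSet_le (τ := τ) h
  simpa using this

lemma adj_finite (u : Fin d → ℤ) : {w : Fin d → ℤ | adjZ u w}.Finite := by
  have hsub : {w : Fin d → ℤ | adjZ u w} ⊆
      Set.pi Set.univ (fun i => {u i - 1, u i, u i + 1}) := by
    intro w hw i _
    have hsum : (∑ j, (u j - w j).natAbs) = 1 := hw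
    have hle : (u i - w i).natAbs ≤ 1 := by
      calc (u i - w i).natAbs ≤ ∑ j, (u j - w j).natAbs :=
            Finset.single_le_sum (f := fun j => (u j - w j).natAbs) (fun j _ => Nat.zero_le _) (Finset.mem_univ i)
      _ = 1 := hsum
    have : (u i - w i).natAbs = 0 ∨ (u i - w i).natAbs = 1 := by omega
    rcases this with h0 | h1
    · have : u i - w i = 0 := Int.natAbs_eq_zero.mp h0
      have : w i = u i := by omega
      simp [this]
    · have := Int.natAbs_eq (u i - w i)
      rw [h1] at this
      rcases this with h | h
      · have : w i = u i - 1 := by omega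
        simp [this]
      · have : w i = u i + 1 := by omega
        simp [this]
  exact Set.Finite.subset (Set.Finite.pi (fun i => by
    apply Set.Finite.insert; apply Set.Finite.insert; exact Set.finite_singleton _)) hsub

lemma head?_eq_some_get {α : Type*} (l : List α) (h : 0 < l.length) :
    l.head? = some (l.get ⟨0, h⟩) := by
  cases l with
  | nil => simp at h
  | cons a t => rfl

lemma segment_geodesic {A : Set (Fin d → ℤ)} {z : Fin d → ℤ} {l : List (Fin d → ℤ)}
    (hpath : IsPathFromSet A z l) (hopt : pathTime τ l = fpTSet τ A z)
    {m n : ℕ} (hmn : m ≤ n) (hn : n < l.length) :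
    pathTime τ ((l.drop m).take (n - m + 1)) =
      fpT τ (l.get ⟨m, lt_of_le_of_lt hmn hn⟩) (l.get ⟨n, hn⟩) := by
  obtain ⟨u, huA, hhead, hlast, hchain⟩ := hpath
  have hm : m < l.length := lt_of_le_of_lt hmn hn
  set vm := l.get ⟨m, hm⟩ with hvm
  set vn := l.get ⟨n, hn⟩ with hvn
  set Apart := l.take (m+1) with hA
  set Bpart := (l.drop m).take (n - m + 1) with hB
  set Cpart := l.drop n with hC
  -- endpoint facts
  have hAlast : Apart.getLast? = some vm := getLast?_take_succ l hm
  have hBhead : Bpart.head? = some vm := by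
    rw [hB, head?_take_pos _ (Nat.succ_pos _), List.head?_drop,
      List.getElem?_eq_getElem hm]
    rfl
  have hdroplen : n - m < (l.drop m).length := by
    rw [List.length_drop]; omega
  have hBlast : Bpart.getLast? = some vn := by
    rw [hB, getLast?_take_succ (l.drop m) hdroplen]
    congr 1
    show (l.drop m)[n - m] = l[n]
    rw [List.getElem_drop]
    congr 1
    omega
  have hChead : Cpart.head? = some vn := by
    rw [hC, List.head?_drop, List.getElem?_eq_getElem hn]; rfl
  have hCne : Cpart ≠ [] := by
    rw [hC]
    intro hnil
    rw [List.drop_eq_nil_iff] at hnil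
    omega
  have hClast : Cpart.getLast? = some z := by
    rw [← hlast]
    conv_rhs => rw [← List.take_append_drop n l]
    rw [List.getLast?_append_of_ne_nil _ hCne]
  have hBne : Bpart ≠ [] := by
    intro hnil; rw [hnil] at hBhead; simp at hBhead
  have hAne : Apart ≠ [] := by
    intro hnil; rw [hnil] at hAlast; simp at hAlast
  -- decomposition
  have hBtail : Bpart.tail = (l.drop (m+1)).take (n - m) := by
    rw [hB, tail_take', List.tail_drop]
  have hCtail : Cpart.tail = l.drop (n+1) := by
    rw [hC, List.tail_drop]
  have hdecomp : l = Apart ++ (Bpart.tail ++ Cpart.tail) := by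
    rw [hBtail, hCtail, hA]
    have h1 : l.drop (n+1) = (l.drop (m+1)).drop (n - m) := by
      rw [List.drop_drop]
      congr 1
      omega
    rw [h1, List.take_append_drop, List.take_append_drop]
  -- chains
  have hchainA : List.Chain' adjZ Apart := hchain.take _
  have hchainB : List.Chain' adjZ Bpart := (hchain.drop m).take _
  have hchainC : List.Chain' adjZ Cpart := hchain.drop n
  have pathB : IsPathFrom vm vn Bpart := ⟨hBhead, hBlast, hchainB⟩
  -- path time decomposition
  have hheadBC : (Bpart ++ Cpart.tail).head? = some vm := by
    rw [List.head?_append_of_ne_nil _ hBne, hBhead]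
  have htimeBC : pathTime τ (Bpart ++ Cpart.tail) = pathTime τ Bpart + pathTime τ Cpart :=
    pathTime_append_overlap _ _ (by rw [hBlast, hChead])
  have htime : pathTime τ l = pathTime τ Apart + (pathTime τ Bpart + pathTime τ Cpart) := by
    have h2 : Apart.getLast? = (Bpart ++ Cpart.tail).head? := by rw [hAlast, hheadBC]
    have h3 := pathTime_append_overlap (τ := τ) Apart (Bpart ++ Cpart.tail) h2
    rw [List.tail_append_of_ne_nil hBne] at h3
    rw [hdecomp]
    rw [h3, htimeBC]
  -- fpT ≤ pathTime Bpart
  have hle : fpT τ vm vn ≤ pathTime τ Bpart := fpT_le pathB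
  refine le_antisymm ?_ hle
  by_contra hlt
  push_neg at hlt
  obtain ⟨σ, hσpath, hσlt⟩ := exists_path_lt ⟨Bpart, pathB⟩ hlt
  obtain ⟨hσhead, hσlast, hσchain⟩ := hσpath
  have hσne : σ ≠ [] := by intro hnil; rw [hnil] at hσhead; simp at hσhead
  -- splice
  set p' := Apart ++ (σ ++ Cpart.tail).tail with hp'
  have hheadSC : (σ ++ Cpart.tail).head? = some vm := by
    rw [List.head?_append_of_ne_nil _ hσne, hσhead]
  have hSCne : σ ++ Cpart.tail ≠ [] := by
    simp [hσne]
  have hlastSC : (σ ++ Cpart.tail).getLast? = some z := by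
    have := getLast?_append_overlap (α := σ) (β := Cpart) (by rw [hσlast, hChead])
    rw [this, if_neg hCne, hClast]
  have hchainSC : List.Chain' adjZ (σ ++ Cpart.tail) :=
    chain'_append_overlap hσchain hchainC (by rw [hσlast, hChead])
  have hp'head : p'.head? = some u := by
    rw [hp', List.head?_append_of_ne_nil _ hAne, hA, head?_take_pos _ (Nat.succ_pos _), hhead]
  have hp'last : p'.getLast? = some z := by
    have := getLast?_append_overlap (α := Apart) (β := σ ++ Cpart.tail)
      (by rw [hAlast, hheadSC])
    rw [hp', this, if_neg hSCne, hlastSC]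
  have hp'chain : List.Chain' adjZ p' :=
    chain'_append_overlap hchainA hchainSC (by rw [hAlast, hheadSC])
  have hp'pathset : IsPathFromSet A z p' := ⟨u, huA, hp'head, hp'last, hp'chain⟩
  have hp'time : pathTime τ p' = pathTime τ Apart + (pathTime τ σ + pathTime τ Cpart) := by
    have h3 := pathTime_append_overlap (τ := τ) Apart (σ ++ Cpart.tail)
      (by rw [hAlast, hheadSC])
    rw [List.tail_append_of_ne_nil hσne] at h3
    have h4 := pathTime_append_overlap (τ := τ) σ Cpart (by rw [hσlast, hChead])
    rw [hp']
    rw [List.tail_append_of_ne_nil hσne, h3, h4]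
  have hcontr : fpTSet τ A z ≤ pathTime τ p' := fpTSet_le hp'pathset
  rw [hp'time] at hcontr
  have hstrict : pathTime τ Apart + (pathTime τ σ + pathTime τ Cpart)
      < pathTime τ Apart + (pathTime τ Bpart + pathTime τ Cpart) := by
    exact add_lt_add_right (add_lt_add_left hσlt _) _
  rw [← htime, hopt] at hstrict
  exact absurd (lt_of_le_of_lt hcontr hstrict) (lt_irrefl _)

lemma exists_one_sided {B I : Set (Fin d → ℤ)} (hBfin : B.Finite) (hI : I.Infinite)
    (hgeo : ∀ v ∈ I, ∃ γ : List (Fin d → ℤ), IsPathFromSet B v γ ∧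
      pathTime τ γ = fpTSet τ B v ∧ ∀ w ∈ γ, w ∈ B ∪ I) :
    ∃ g : ℕ → (Fin d → ℤ), g 0 ∈ B ∧ (∀ n, adjZ (g n) (g (n + 1))) ∧
      (∀ m n : ℕ, m < n →
        pathTime τ ((List.range (n - m + 1)).map fun t => g (m + t)) =
          fpT τ (g m) (g n)) ∧
      (∀ n, g n ∈ B ∪ I) := by
  classical
  have hchoice : ∀ v : Fin d → ℤ, ∃ γ : List (Fin d → ℤ), v ∈ I →
      (IsPathFromSet B v γ ∧ pathTime τ γ = fpTSet τ B v ∧ ∀ w ∈ γ, w ∈ B ∪ I) := by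
    intro v
    by_cases hv : v ∈ I
    · exact (hgeo v hv).imp fun γ h => fun _ => h
    · exact ⟨[], fun h => absurd h hv⟩
  choose γf hγf using hchoice
  -- the extension step
  have step : ∀ p : List (Fin d → ℤ), {v | v ∈ I ∧ p <+: γf v}.Infinite →
      ∃ w, {v | v ∈ I ∧ (p ++ [w]) <+: γf v}.Infinite := by
    intro p hT
    set T' : Set (Fin d → ℤ) := {v | v ∈ I ∧ p <+: γf v ∧ γf v ≠ p} with hT'def
    have hsub : {v | v ∈ I ∧ p <+: γf v} \ T' ⊆ {v | v ∈ I ∧ γf v = p} := by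
      intro v hv
      obtain ⟨⟨hvI, hvp⟩, hvn⟩ := hv
      refine ⟨hvI, ?_⟩
      by_contra hne
      exact hvn ⟨hvI, hvp, hne⟩
    have hss : {v | v ∈ I ∧ γf v = p}.Subsingleton := by
      intro v hv w hw
      have h1 : (γf v).getLast? = some v := (hγf v hv.1).1.choose_spec.2.2.1
      have h2 : (γf w).getLast? = some w := (hγf w hw.1).1.choose_spec.2.2.1
      rw [hv.2] at h1
      rw [hw.2] at h2
      rw [h1] at h2
      exact Option.some_inj.mp h2
    have hT'inf : T'.Infinite := by
      have := hT.diff (hss.finite)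
      refine this.mono ?_
      intro v hv
      obtain ⟨⟨hvI, hvp⟩, hvn⟩ := hv
      have : γf v ≠ p := fun h => hvn ⟨hvI, h⟩
      exact ⟨hvI, hvp, this⟩
    have hlenlt : ∀ v ∈ T', p.length < (γf v).length := by
      intro v hv
      obtain ⟨hvI, hvp, hvne⟩ := hv
      rcases lt_or_eq_of_le hvp.length_le with h | h
      · exact h
      · exact absurd (List.IsPrefix.eq_of_length hvp h).symm hvne
    -- candidate set
    set F : Set (Fin d → ℤ) := B ∪ ⋃ u ∈ {u | u ∈ p}, {w | adjZ u w} with hFdef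
    have hFfin : F.Finite := by
      refine hBfin.union (Set.Finite.biUnion ?_ (fun u _ => adj_finite u))
      exact p.finite_toSet
    have hmemF : ∀ v ∈ T', ∀ (h : p.length < (γf v).length),
        (γf v).get ⟨p.length, h⟩ ∈ F := by
      intro v hv h
      obtain ⟨hvI, hvp, hvne⟩ := hv
      rcases Nat.eq_zero_or_pos p.length with hp0 | hppos
      · -- p is empty; the next vertex is the head, which lies in B
        obtain ⟨u, huB, hhead, -, -⟩ := (hγf v hvI).1
        left
        have hget : (γf v).get ⟨p.length, h⟩ = (γf v).get ⟨0, by omega⟩ := by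
          congr 1
          exact Fin.mk_eq_mk.mpr hp0
        rw [hget]
        have h2 := head?_eq_some_get (γf v) (by omega)
        rw [hhead] at h2
        rw [← Option.some_inj.mp h2]
        exact huB
      · -- otherwise it is adjacent to the last vertex of p
        obtain ⟨-, -, hchain⟩ := (hγf v hvI).1.choose_spec.2
        right
        have hidx : p.length - 1 < (γf v).length - 1 := by omega
        have hadj := List.isChain_iff_getElem.mp hchain (p.length - 1) (by omega)
        have hpt : p = List.take p.length (γf v) := List.prefix_iff_eq_take.mp hvp
        have hmem : (γf v).get ⟨p.length - 1, by omega⟩ ∈ {u | u ∈ p} := by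
          show (γf v).get ⟨p.length - 1, by omega⟩ ∈ p
          have hpe := hvp.getElem (show p.length - 1 < p.length by omega)
          rw [List.get_eq_getElem, ← hpe]
          exact List.getElem_mem _
        have hfix : (γf v).get ⟨p.length - 1 + 1, by omega⟩ = (γf v).get ⟨p.length, h⟩ := by
          congr 1
          exact Fin.mk_eq_mk.mpr (by omega)
        refine Set.mem_biUnion hmem ?_
        show adjZ ((γf v).get ⟨p.length - 1, by omega⟩) ((γf v).get ⟨p.length, h⟩)
        rw [← hfix]
        exact hadj
    -- pigeonhole
    by_contra hcon
    push_neg at hcon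
    have hfin : ∀ w : Fin d → ℤ, {v | v ∈ I ∧ (p ++ [w]) <+: γf v}.Finite := by
      intro w
      rcases hcon w with h
      exact h
    have hcover : T' ⊆ ⋃ w ∈ F, {v | v ∈ I ∧ (p ++ [w]) <+: γf v} := by
      intro v hv
      have hlt := hlenlt v hv
      have hwF' : (γf v).get ⟨p.length, hlt⟩ ∈ F := hmemF v hv hlt
      obtain ⟨hvI, hvp, -⟩ := hv
      set w := (γf v).get ⟨p.length, hlt⟩ with hw
      refine Set.mem_biUnion hwF' ⟨hvI, ?_⟩
      have hpt : p = List.take p.length (γf v) := List.prefix_iff_eq_take.mp hvp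
      have hts : List.take (p.length + 1) (γf v) = List.take p.length (γf v) ++ [w] := by
        rw [List.take_succ, List.getElem?_eq_getElem hlt]
        rfl
      rw [hpt]
      rw [← hts]
      exact List.take_prefix _ _
    exact hT'inf (Set.Finite.subset (Set.Finite.biUnion hFfin (fun w _ => hfin w)) hcover)
  -- base case
  have h0 : {v | v ∈ I ∧ ([] : List (Fin d → ℤ)) <+: γf v}.Infinite := by
    refine hI.mono ?_
    intro v hv
    exact ⟨hv, List.nil_prefix⟩
  -- the increasing sequence of finite geodesic prefixes
  let seq : ℕ → {p : List (Fin d → ℤ) // {v | v ∈ I ∧ p <+: γf v}.Infinite} := fun n =>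
    Nat.rec
      ⟨[] ++ [(step [] h0).choose], (step [] h0).choose_spec⟩
      (fun _ ih => ⟨ih.1 ++ [(step ih.1 ih.2).choose], (step ih.1 ih.2).choose_spec⟩) n
  have hstep : ∀ n, (seq (n+1)).1 = (seq n).1 ++ [(step (seq n).1 (seq n).2).choose] :=
    fun n => rfl
  have hlen : ∀ n, (seq n).1.length = n + 1 := by
    intro n
    induction n with
    | zero => rfl
    | succ n ih => rw [hstep, List.length_append, ih]; rfl
  have hpre : ∀ m n, m ≤ n → (seq m).1 <+: (seq n).1 := by
    intro m n hmn
    induction n with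
    | zero => 
        have : m = 0 := by omega
        subst this
        exact List.prefix_refl _
    | succ n ih =>
        rcases Nat.lt_or_ge m (n+1) with h | h
        · refine (ih (by omega)).trans ?_
          rw [hstep]
          exact List.prefix_append _ _
        · have : m = n + 1 := by omega
          subst this
          exact List.prefix_refl _
  let g : ℕ → (Fin d → ℤ) := fun n => (seq n).1.get ⟨n, by rw [hlen]; omega⟩
  -- each seq n is a prefix of infinitely many γf v; key transfer lemma
  have hkey : ∀ n v, (seq n).1 <+: γf v → ∀ s, (hs : s ≤ n) → ∀ (h : s < (γf v).length),
      g s = (γf v).get ⟨s, h⟩ := by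
    intro n v hvp s hs h
    have hsp : (seq s).1 <+: γf v := (hpre s n hs).trans hvp
    have hlt : s < (seq s).1.length := by rw [hlen]; omega
    show (seq s).1.get ⟨s, _⟩ = (γf v).get ⟨s, h⟩
    rw [List.get_eq_getElem, List.get_eq_getElem]
    exact hsp.getElem hlt
  have hnonempty : ∀ n, ∃ v, v ∈ I ∧ (seq n).1 <+: γf v := fun n => (seq n).2.nonempty
  have hlonger : ∀ n v, (seq n).1 <+: γf v → n < (γf v).length := by
    intro n v hv
    have := hv.length_le
    rw [hlen] at this
    omega
  refine ⟨g, ?_, ?_, ?_, ?_⟩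
  · -- g 0 ∈ B
    obtain ⟨v, hvI, hvp⟩ := hnonempty 0
    obtain ⟨u, huB, hhead, -, -⟩ := (hγf v hvI).1
    have h0' : 0 < (γf v).length := hlonger 0 v hvp
    have hsome : (γf v).head? = some ((γf v).get ⟨0, h0'⟩) := head?_eq_some_get _ h0'
    rw [hhead] at hsome
    have hu : u = (γf v).get ⟨0, h0'⟩ := Option.some_inj.mp hsome
    rw [hkey 0 v hvp 0 le_rfl h0']
    exact hu ▸ huB
  · -- adjacency
    intro n
    obtain ⟨v, hvI, hvp⟩ := hnonempty (n+1)
    obtain ⟨-, -, hchain⟩ := (hγf v hvI).1.choose_spec.2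
    have hlt : n + 1 < (γf v).length := hlonger (n+1) v hvp
    have hadj := List.isChain_iff_getElem.mp hchain n (by omega)
    rw [hkey (n+1) v hvp n (by omega) (by omega), hkey (n+1) v hvp (n+1) le_rfl (by omega)]
    exact hadj
  · -- geodesic segments
    intro m n hmn
    obtain ⟨v, hvI, hvp⟩ := hnonempty n
    obtain ⟨hpathset, hopt, -⟩ := hγf v hvI
    have hlt : n < (γf v).length := hlonger n v hvp
    have hseg := segment_geodesic (τ := τ) hpathset hopt (le_of_lt hmn) hlt
    have hlist : (List.range (n - m + 1)).map (fun t => g (m + t)) =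
        ((γf v).drop m).take (n - m + 1) := by
      apply List.ext_get
      · rw [List.length_map, List.length_range, List.length_take, List.length_drop]
        omega
      · intro t h1 h2
        rw [show ∀ (f : ℕ → (Fin d → ℤ)) (l : List ℕ) (i : Fin (l.map f).length), (l.map f).get i = f (l.get ⟨i, by simpa using i.2⟩) from fun f l i => by simp]
        have ht : t < n - m + 1 := by
          rw [List.length_map, List.length_range] at h1
          exact h1
        have hrange : (List.range (n - m + 1)).get ⟨t, by rw [List.length_range]; exact ht⟩ = t :=
          List.getElem_range _
        rw [hrange]
        have hmt : m + t < (γf v).length := by omega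
        rw [List.get_eq_getElem, List.getElem_take]
        rw [List.getElem_drop]
        exact hkey n v hvp (m + t) (by omega) hmt
    rw [hlist, hkey n v hvp m (by omega) (by omega), hkey n v hvp n le_rfl hlt]
    exact hseg
  · -- membership
    intro n
    obtain ⟨v, hvI, hvp⟩ := hnonempty n
    obtain ⟨-, -, hmem⟩ := hγf v hvI
    have hlt : n < (γf v).length := hlonger n v hvp
    rw [hkey n v hvp n le_rfl hlt]
    exact hmem _ (List.get_mem _ _)

lemma union_infected_disjoint {k : ℕ} {A : Fin k → Set (Fin d → ℤ)}
    (hdisj : ∀ i j, i ≠ j → Disjoint (A i) (A j)) (i j : Fin k) (hij : i ≠ j) :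
    Disjoint (A i ∪ infectedBy τ A i) (A j ∪ infectedBy τ A j) := by
  rw [Set.disjoint_left]
  rintro x (hxi | hxi) (hxj | hxj)
  · exact Set.disjoint_left.mp (hdisj i j hij) hxi hxj
  · have h0 : fpTSet τ (A i) x = 0 := fpTSet_eq_zero hxi
    have := hxj i hij
    rw [h0] at this
    exact absurd this (by simp)
  · have h0 : fpTSet τ (A j) x = 0 := fpTSet_eq_zero hxj
    have := hxi j hij.symm
    rw [h0] at this
    exact absurd this (by simp)
  · have h1 := hxi j hij.symm
    have h2 := hxj i hij
    exact absurd (h1.trans h2) (lt_irrefl _)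

end FPPAux

/-- if coexistence of `k` species occurs (each species infects
infinitely many vertices) and infection is transmitted along finite geodesics,
then there exist `k` pairwise disjoint one-sided (semi-infinite) geodesics, the
`i`-th starting in `A i`. -/
theorem coexistence_implies_disjoint_geodesics {d k : ℕ} (hd : 2 ≤ d)
    (τ : (Fin d → ℤ) → (Fin d → ℤ) → ℝ≥0)
    (hsymm : ∀ u v, τ u v = τ v u)
    (A : Fin k → Set (Fin d → ℤ))
    (hfin : ∀ i, (A i).Finite)
    (hne : ∀ i, (A i).Nonempty)
    (hdisj : ∀ i j, i ≠ j → Disjoint (A i) (A j))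
    (hcoex : ∀ i, (infectedBy τ A i).Infinite)
    (hgeo : ∀ i, ∀ v ∈ infectedBy τ A i, ∃ γ : List (Fin d → ℤ),
      IsPathFromSet (A i) v γ ∧ pathTime τ γ = fpTSet τ (A i) v ∧
      ∀ w ∈ γ, w ∈ A i ∪ infectedBy τ A i) :
    ∃ g : Fin k → ℕ → (Fin d → ℤ),
      (∀ i, g i 0 ∈ A i) ∧
      (∀ i n, adjZ (g i n) (g i (n + 1))) ∧
      (∀ i m n, m < n →
        pathTime τ ((List.range (n - m + 1)).map fun t => g i (m + t)) =
          fpT τ (g i m) (g i n)) ∧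
      (∀ i j, i ≠ j → Disjoint (Set.range (g i)) (Set.range (g j))) := by
  classical
  have key : ∀ i : Fin k, ∃ g : ℕ → (Fin d → ℤ),
      (g 0 ∈ A i ∧ (∀ n, adjZ (g n) (g (n + 1))) ∧
        (∀ m n, m < n →
          pathTime τ ((List.range (n - m + 1)).map fun t => g (m + t)) =
            fpT τ (g m) (g n))) ∧
      (∀ n, g n ∈ A i ∪ infectedBy τ A i) := by
    intro i
    obtain ⟨g, h1, h2, h3, h4⟩ := FPPAux.exists_one_sided (hfin i) (hcoex i) (hgeo i)
    exact ⟨g, ⟨h1, h2, h3⟩, h4⟩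
  choose g hg hmem using key
  refine ⟨g, fun i => (hg i).1, fun i => (hg i).2.1, fun i => (hg i).2.2, ?_⟩
  intro i j hij
  have hd2 := FPPAux.union_infected_disjoint (τ := τ) hdisj i j hij
  rw [Set.disjoint_left]
  rintro x ⟨n, rfl⟩ ⟨m, hm⟩
  have hxi : g i n ∈ A i ∪ infectedBy τ A i := hmem i n
  have hxj : g i n ∈ A j ∪ infectedBy τ A j := hm ▸ hmem j m
  exact Set.disjoint_left.mp hd2 hxi hxj
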